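/- Let K ≥ 2 and s be integers with 1 ≤ s ≤ K. For an integer r with 1 ≤ r ≤ K, define L_coded(r, s) = ∑_{ℓ = max(r,s)}^{min(r+s, K)} [C(K−r, ℓ−r)·C(r, ℓ−s)/C(K,s)]·(ℓ−r)/(ℓ−1), where C(·,·) denotes the binomial coefficient. Then the sequence r ↦ L_coded(r, s) is discretely convex on {1,…,K}: for every integer j with 2 ≤ j ≤ K−1, L_coded(j−1, s) + L_coded(j+1, s) ≥ 2·L_coded(j, s). -/

import Mathlib

open Finset

/-- The communication load `L_coded(r,s)` of the CDC scheme in the cascaded framework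
(converse form): `∑_{ℓ=max(r,s)}^{min(r+s,K)} [C(K-r,ℓ-r) C(r,ℓ-s)/C(K,s)] (ℓ-r)/(ℓ-1)`.
(The term `ℓ = r` contributes `0`, so this agrees with the sum starting at
`max(r+1,s)`.) -/
noncomputable def LcodedConv (K s r : ℕ) : ℝ :=
  ∑ ℓ ∈ Finset.Icc (max r s) (min (r + s) K),
    ((Nat.choose (K - r) (ℓ - r) : ℝ) * (Nat.choose r (ℓ - s) : ℝ) /
        (Nat.choose K s : ℝ)) *
      (((ℓ : ℝ) - r) / ((ℓ : ℝ) - 1))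

/-- For integers `K ≥ 2` and `1 ≤ s ≤ K`, the sequence
`r ↦ L_coded(r,s)` is discretely convex on `{1, …, K}`: for every integer `j` with
`2 ≤ j ≤ K - 1`, `L_coded(j-1,s) + L_coded(j+1,s) ≥ 2 L_coded(j,s)`. -/

noncomputable def cdcf {K : ℕ} (S R : Finset (Fin K)) : ℝ :=
  ((S \ R).card : ℝ) / (((S ∪ R).card : ℝ) - 1)

lemma fiber_card {K s : ℕ} (R : Finset (Fin K)) (ℓ : ℕ)
    (hsl : s ≤ ℓ) (hrl : R.card ≤ ℓ) (hlrs : ℓ ≤ R.card + s) :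
    (((univ : Finset (Fin K)).powersetCard s).filter (fun S => (S ∪ R).card = ℓ)).card
      = Nat.choose (K - R.card) (ℓ - R.card) * Nat.choose R.card (ℓ - s) := by
  set r := R.card with hr
  have key : (((univ : Finset (Fin K)).powersetCard s).filter (fun S => (S ∪ R).card = ℓ)).card
      = ((Rᶜ.powersetCard (ℓ - r)) ×ˢ (R.powersetCard (s - (ℓ - r)))).card := by
    apply card_nbij' (fun S => (S \ R, S ∩ R)) (fun p => p.1 ∪ p.2)
    · intro S hS
      simp only [mem_coe, mem_filter, mem_powersetCard] at hS
      obtain ⟨⟨hSu, hScard⟩, hUnion⟩ := hS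
      have h1 : (S \ R).card + R.card = (S ∪ R).card := card_sdiff_add_card S R
      have h2 : (S ∩ R).card + (S \ R).card = S.card := card_inter_add_card_sdiff S R
      simp only [mem_coe, mem_product, mem_powersetCard]
      refine ⟨⟨fun x hx => ?_, by omega⟩, inter_subset_right, by omega⟩
      simp only [mem_sdiff] at hx
      simpa using hx.2
    · intro p hp
      simp only [mem_coe, mem_product, mem_powersetCard] at hp
      obtain ⟨⟨hA, hAcard⟩, hB, hBcard⟩ := hp
      have hdisj : Disjoint p.1 R := by
        rw [disjoint_iff_inter_eq_empty, ← subset_empty]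
        intro x hx
        simp only [mem_inter] at hx
        have := hA hx.1
        simp only [mem_compl] at this
        exact absurd hx.2 this
      have hdisj2 : Disjoint p.1 p.2 := hdisj.mono_right hB
      have hU : p.1 ∪ p.2 ∪ R = p.1 ∪ R := by
        rw [union_assoc, union_eq_right.2 hB]
      simp only [mem_coe, mem_filter, mem_powersetCard]
      refine ⟨⟨subset_univ _, ?_⟩, ?_⟩
      · rw [card_union_of_disjoint hdisj2]; omega
      · rw [hU, card_union_of_disjoint hdisj]; omega
    · intro S hS
      exact sdiff_union_inter S R
    · intro p hp
      simp only [mem_coe, mem_product, mem_powersetCard] at hp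
      obtain ⟨⟨hA, hAcard⟩, hB, hBcard⟩ := hp
      have h1 : (p.1 ∪ p.2) \ R = p.1 := by
        ext x
        simp only [mem_sdiff, mem_union]
        constructor
        · rintro ⟨hx | hx, hxr⟩
          · exact hx
          · exact absurd (hB hx) hxr
        · intro hx
          have := hA hx
          simp only [mem_compl] at this
          exact ⟨Or.inl hx, this⟩
      have h2 : (p.1 ∪ p.2) ∩ R = p.2 := by
        ext x
        simp only [mem_inter, mem_union]
        constructor
        · rintro ⟨hx | hx, hxr⟩
          · have := hA hx
            simp only [mem_compl] at this
            exact absurd hxr this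
          · exact hx
        · intro hx
          exact ⟨Or.inr hx, hB hx⟩
      beta_reduce
      rw [h1, h2]
  rw [key, card_product, card_powersetCard, card_powersetCard, card_compl,
    Fintype.card_fin]
  congr 1
  have h3 : s - (ℓ - r) = r - (ℓ - s) := by omega
  rw [h3, Nat.choose_symm (by omega)]

lemma lemA {K s : ℕ} (R : Finset (Fin K)) :
    LcodedConv K s R.card =
      (∑ S ∈ (univ : Finset (Fin K)).powersetCard s, cdcf S R) / (Nat.choose K s : ℝ) := by
  set r := R.card with hr
  have hmaps : ∀ S ∈ (univ : Finset (Fin K)).powersetCard s,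
      (S ∪ R).card ∈ Finset.Icc (max r s) (min (r + s) K) := by
    intro S hS
    rw [mem_powersetCard] at hS
    have hSc : S.card = s := hS.2
    have h4 : (S ∩ R).card ≤ R.card := card_le_card inter_subset_right
    have h1 : (S \ R).card + R.card = (S ∪ R).card := card_sdiff_add_card S R
    have h2 : (S ∩ R).card + (S \ R).card = S.card := card_inter_add_card_sdiff S R
    have h3 : (S ∪ R).card ≤ K := by
      simpa [Fintype.card_fin] using card_le_card (subset_univ (S ∪ R))
    rw [mem_Icc]
    omega
  rw [← Finset.sum_fiberwise_of_maps_to hmaps (fun S => cdcf S R)]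
  rw [LcodedConv, Finset.sum_div]
  apply Finset.sum_congr rfl
  intro ℓ hℓ
  rw [mem_Icc] at hℓ
  obtain ⟨h1, h2⟩ := hℓ
  have hsl : s ≤ ℓ := le_trans (le_max_right _ _) h1
  have hrl : r ≤ ℓ := le_trans (le_max_left _ _) h1
  have hlrs : ℓ ≤ r + s := le_trans h2 (min_le_left _ _)
  have hfib := fiber_card R ℓ hsl hrl hlrs
  have hterm : ∀ S ∈ ((univ : Finset (Fin K)).powersetCard s).filter
      (fun S => (S ∪ R).card = ℓ), cdcf S R = ((ℓ : ℝ) - r) / ((ℓ : ℝ) - 1) := by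
    intro S hS
    rw [mem_filter] at hS
    have h1 : (S \ R).card + R.card = (S ∪ R).card := card_sdiff_add_card S R
    rw [cdcf, hS.2]
    congr 1
    have : (S \ R).card = ℓ - r := by omega
    rw [this]
    push_cast [Nat.cast_sub hrl]
    ring
  rw [Finset.sum_congr rfl hterm, Finset.sum_const, hfib, nsmul_eq_mul]
  push_cast
  ring

lemma lemB {K : ℕ} (S T : Finset (Fin K)) (x y : Fin K) (hxy : x ≠ y)
    (hx : x ∉ T) (hy : y ∉ T) (hT : T.Nonempty) :
    cdcf S (insert x T) + cdcf S (insert y T) ≤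
      cdcf S T + cdcf S (insert x (insert y T)) := by
  set n := (S \ T).card with hn
  have ht1 : 1 ≤ T.card := card_pos.2 hT
  have hu : (S ∪ T).card = n + T.card := (card_sdiff_add_card S T).symm
  -- basic set computations
  have hdx : S \ insert x T = (S \ T).erase x := by
    rw [Finset.sdiff_insert]
  have hdy : S \ insert y T = (S \ T).erase y := by
    rw [Finset.sdiff_insert]
  have hdxy : S \ insert x (insert y T) = ((S \ T).erase y).erase x := by
    rw [Finset.sdiff_insert, Finset.sdiff_insert]
  have hux : S ∪ insert x T = insert x (S ∪ T) := by
    ext z; simp [or_left_comm, or_comm, or_assoc]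
  have huy : S ∪ insert y T = insert y (S ∪ T) := by
    ext z; simp [or_left_comm, or_comm, or_assoc]
  have huxy : S ∪ insert x (insert y T) = insert x (insert y (S ∪ T)) := by
    ext z; simp [or_left_comm, or_comm, or_assoc]
  rcases Nat.eq_zero_or_pos n with hn0 | hn1
  · -- S ⊆ T : all numerators vanish
    have hsub : S \ T = ∅ := card_eq_zero.mp (by omega)
    have e1 : (S \ insert x T).card = 0 := by rw [hdx, hsub]; simp
    have e2 : (S \ insert y T).card = 0 := by rw [hdy, hsub]; simp
    have e3 : (S \ insert x (insert y T)).card = 0 := by rw [hdxy, hsub]; simp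
    simp [cdcf, hsub, e1, e2, e3]
  · -- main case
    have hu2 : 2 ≤ (S ∪ T).card := by omega
    set U : ℝ := ((S ∪ T).card : ℝ) with hU
    have hU2 : (2 : ℝ) ≤ U := by rw [hU]; exact_mod_cast hu2
    have hUpos : (0:ℝ) < U - 1 := by linarith
    have hU0 : (0:ℝ) < U := by linarith
    have hU1 : (0:ℝ) < U + 1 := by linarith
    by_cases mx : x ∈ S <;> by_cases my : y ∈ S
    · -- both in S
      have hxS : x ∈ S \ T := mem_sdiff.2 ⟨mx, hx⟩
      have hyS : y ∈ S \ T := mem_sdiff.2 ⟨my, hy⟩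
      have hn2 : 2 ≤ n := by
        have : ({x, y} : Finset (Fin K)) ⊆ S \ T := by
          intro z hz; simp only [mem_insert, mem_singleton] at hz
          rcases hz with rfl | rfl; exacts [hxS, hyS]
        have := card_le_card this
        rwa [card_insert_of_notMem (by simpa using hxy), card_singleton] at this
      have c1 : ((S \ insert x T).card : ℝ) = (n : ℝ) - 1 := by
        rw [hdx, card_erase_of_mem hxS, Nat.cast_sub (by omega : 1 ≤ n)]; norm_num
      have c2 : ((S \ insert y T).card : ℝ) = (n : ℝ) - 1 := by
        rw [hdy, card_erase_of_mem hyS, Nat.cast_sub (by omega : 1 ≤ n)]; norm_num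
      have c3 : ((S \ insert x (insert y T)).card : ℝ) = (n : ℝ) - 2 := by
        rw [hdxy, card_erase_of_mem (mem_erase.2 ⟨hxy, hxS⟩), card_erase_of_mem hyS]
        have e : #(S \ T) - 1 - 1 = n - 2 := by omega
        rw [e, Nat.cast_sub (by omega : 2 ≤ n)]; norm_num
      have d1 : ((S ∪ insert x T).card : ℝ) = U := by
        rw [hux, card_insert_of_mem (mem_union_left _ mx)]
      have d2 : ((S ∪ insert y T).card : ℝ) = U := by
        rw [huy, card_insert_of_mem (mem_union_left _ my)]
      have d3 : ((S ∪ insert x (insert y T)).card : ℝ) = U := by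
        rw [huxy, card_insert_of_mem (mem_insert_of_mem (mem_union_left _ mx)),
          card_insert_of_mem (mem_union_left _ my)]
      rw [cdcf, cdcf, cdcf, cdcf, c1, c2, c3, d1, d2, d3]
      rw [← add_div, ← add_div]
      exact le_of_eq (by ring)
    · -- x ∈ S, y ∉ S
      have hxS : x ∈ S \ T := mem_sdiff.2 ⟨mx, hx⟩
      have hyS : y ∉ S \ T := fun h => my (mem_sdiff.1 h).1
      have c1 : ((S \ insert x T).card : ℝ) = (n : ℝ) - 1 := by
        rw [hdx, card_erase_of_mem hxS, Nat.cast_sub (by omega : 1 ≤ n)]; norm_num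
      have c2 : ((S \ insert y T).card : ℝ) = (n : ℝ) := by
        rw [hdy, erase_eq_of_notMem hyS]
      have c3 : ((S \ insert x (insert y T)).card : ℝ) = (n : ℝ) - 1 := by
        rw [hdxy, erase_eq_of_notMem hyS, card_erase_of_mem hxS,
          Nat.cast_sub (by omega : 1 ≤ n)]; norm_num
      have d1 : ((S ∪ insert x T).card : ℝ) = U := by
        rw [hux, card_insert_of_mem (mem_union_left _ mx)]
      have d2 : ((S ∪ insert y T).card : ℝ) = U + 1 := by
        rw [huy, card_insert_of_notMem (by simp [my, hy])]; push_cast; rw [hU]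
      have d3 : ((S ∪ insert x (insert y T)).card : ℝ) = U + 1 := by
        rw [huxy, card_insert_of_mem (mem_insert_of_mem (mem_union_left _ mx)),
          card_insert_of_notMem (by simp [my, hy])]; push_cast; rw [hU]
      rw [cdcf, cdcf, cdcf, cdcf, c1, c2, c3, d1, d2, d3]
      have key : ((n:ℝ) - 1) / (U - 1) + (n:ℝ) / (U + 1 - 1) ≤
          (n:ℝ) / (U - 1) + ((n:ℝ) - 1) / (U + 1 - 1) := by
        have h1 : U + 1 - 1 = U := by ring
        rw [h1, div_add_div _ _ hUpos.ne' hU0.ne', div_add_div _ _ hUpos.ne' hU0.ne',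
          div_le_div_iff₀ (by positivity) (by positivity)]
        nlinarith [hUpos, hU0]
      exact key
    · -- y ∈ S, x ∉ S
      have hyS : y ∈ S \ T := mem_sdiff.2 ⟨my, hy⟩
      have hxS : x ∉ S \ T := fun h => mx (mem_sdiff.1 h).1
      have c1 : ((S \ insert x T).card : ℝ) = (n : ℝ) := by
        rw [hdx, erase_eq_of_notMem hxS]
      have c2 : ((S \ insert y T).card : ℝ) = (n : ℝ) - 1 := by
        rw [hdy, card_erase_of_mem hyS, Nat.cast_sub (by omega : 1 ≤ n)]; norm_num
      have c3 : ((S \ insert x (insert y T)).card : ℝ) = (n : ℝ) - 1 := by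
        rw [hdxy, erase_eq_of_notMem (fun h => hxS (mem_of_mem_erase h)),
          card_erase_of_mem hyS, Nat.cast_sub (by omega : 1 ≤ n)]; norm_num
      have d1 : ((S ∪ insert x T).card : ℝ) = U + 1 := by
        rw [hux, card_insert_of_notMem (by simp [mx, hx])]; push_cast; rw [hU]
      have d2 : ((S ∪ insert y T).card : ℝ) = U := by
        rw [huy, card_insert_of_mem (mem_union_left _ my)]
      have d3 : ((S ∪ insert x (insert y T)).card : ℝ) = U + 1 := by
        rw [huxy, card_insert_of_notMem (by simp [mx, hx, hxy]),
          card_insert_of_mem (mem_union_left _ my)]; push_cast; rw [hU]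
      rw [cdcf, cdcf, cdcf, cdcf, c1, c2, c3, d1, d2, d3]
      have h1 : U + 1 - 1 = U := by ring
      rw [h1, div_add_div _ _ hU0.ne' hUpos.ne', div_add_div _ _ hUpos.ne' hU0.ne',
        div_le_div_iff₀ (by positivity) (by positivity)]
      nlinarith [hUpos, hU0]
    · -- neither in S
      have hxS : x ∉ S \ T := fun h => mx (mem_sdiff.1 h).1
      have hyS : y ∉ S \ T := fun h => my (mem_sdiff.1 h).1
      have c1 : ((S \ insert x T).card : ℝ) = (n : ℝ) := by
        rw [hdx, erase_eq_of_notMem hxS]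
      have c2 : ((S \ insert y T).card : ℝ) = (n : ℝ) := by
        rw [hdy, erase_eq_of_notMem hyS]
      have c3 : ((S \ insert x (insert y T)).card : ℝ) = (n : ℝ) := by
        rw [hdxy, erase_eq_of_notMem (fun h => hxS (mem_of_mem_erase h)),
          erase_eq_of_notMem hyS]
      have d1 : ((S ∪ insert x T).card : ℝ) = U + 1 := by
        rw [hux, card_insert_of_notMem (by simp [mx, hx])]; push_cast; rw [hU]
      have d2 : ((S ∪ insert y T).card : ℝ) = U + 1 := by
        rw [huy, card_insert_of_notMem (by simp [my, hy])]; push_cast; rw [hU]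
      have d3 : ((S ∪ insert x (insert y T)).card : ℝ) = U + 2 := by
        rw [huxy, card_insert_of_notMem (by simp [mx, hx, hxy]),
          card_insert_of_notMem (by simp [my, hy])]; push_cast; rw [hU]; ring
      rw [cdcf, cdcf, cdcf, cdcf, c1, c2, c3, d1, d2, d3]
      have h1 : U + 1 - 1 = U := by ring
      have h2 : U + 2 - 1 = U + 1 := by ring
      rw [h1, h2, div_add_div _ _ hU0.ne' hU0.ne', div_add_div _ _ hUpos.ne' hU1.ne',
        div_le_div_iff₀ (by positivity) (by positivity)]
      have hn0' : (0:ℝ) ≤ (n:ℝ) := Nat.cast_nonneg n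
      nlinarith [hUpos, hU0, hU1, hn0']

theorem cdc_cascaded_load_discrete_convex
    (K s : ℕ) (hK : 2 ≤ K) (hs1 : 1 ≤ s) (hsK : s ≤ K)
    (j : ℕ) (hj2 : 2 ≤ j) (hjK : j ≤ K - 1) :
    LcodedConv K s (j - 1) + LcodedConv K s (j + 1) ≥ 2 * LcodedConv K s j := by
  have hjK' : j + 1 ≤ K := by omega
  have hmem : ∀ m ∈ Finset.range (j - 1), m < K := fun m hm => by
    rw [Finset.mem_range] at hm; omega
  set T₀ : Finset (Fin K) := Finset.attachFin (Finset.range (j - 1)) hmem with hT₀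
  set x₀ : Fin K := ⟨j - 1, by omega⟩ with hx₀
  set y₀ : Fin K := ⟨j, by omega⟩ with hy₀
  have hcardT : T₀.card = j - 1 := by
    rw [hT₀, Finset.card_attachFin, Finset.card_range]
  have hxT : x₀ ∉ T₀ := by
    rw [hT₀, Finset.mem_attachFin]; simp; show j ≤ j - 1 + 1; omega
  have hyT : y₀ ∉ T₀ := by
    rw [hT₀, Finset.mem_attachFin]; simp; show j ≤ j + 1; omega
  have hxy : x₀ ≠ y₀ := by
    rw [hx₀, hy₀]; intro h; have := Fin.mk.inj_iff.mp h; omega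
  have hyx : y₀ ∉ insert x₀ T₀ := by
    simp only [Finset.mem_insert]; push_neg; exact ⟨hxy.symm, hyT⟩
  have hTne : T₀.Nonempty := by
    rw [← Finset.card_pos, hcardT]; omega
  have hcx : (insert x₀ T₀).card = j := by
    rw [Finset.card_insert_of_notMem hxT, hcardT]; omega
  have hcy : (insert y₀ T₀).card = j := by
    rw [Finset.card_insert_of_notMem hyT, hcardT]; omega
  have hcxy : (insert x₀ (insert y₀ T₀)).card = j + 1 := by
    have hxyT : x₀ ∉ insert y₀ T₀ := by
      simp only [Finset.mem_insert]; push_neg; exact ⟨hxy, hxT⟩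
    rw [Finset.card_insert_of_notMem hxyT, Finset.card_insert_of_notMem hyT, hcardT]
    omega
  have hsum : ∑ S ∈ (univ : Finset (Fin K)).powersetCard s, cdcf S (insert x₀ T₀)
      + ∑ S ∈ (univ : Finset (Fin K)).powersetCard s, cdcf S (insert y₀ T₀)
      ≤ ∑ S ∈ (univ : Finset (Fin K)).powersetCard s, cdcf S T₀
      + ∑ S ∈ (univ : Finset (Fin K)).powersetCard s, cdcf S (insert x₀ (insert y₀ T₀)) := by
    rw [← Finset.sum_add_distrib, ← Finset.sum_add_distrib]
    exact Finset.sum_le_sum fun S _ => lemB S T₀ x₀ y₀ hxy hxT hyT hTne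
  have hcpos : (0:ℝ) < (Nat.choose K s : ℝ) := by
    exact_mod_cast Nat.choose_pos hsK
  have e1 : LcodedConv K s (j - 1)
      = (∑ S ∈ (univ : Finset (Fin K)).powersetCard s, cdcf S T₀) / (Nat.choose K s : ℝ) := by
    rw [← hcardT]; exact lemA T₀
  have e2 : LcodedConv K s j
      = (∑ S ∈ (univ : Finset (Fin K)).powersetCard s, cdcf S (insert x₀ T₀))
        / (Nat.choose K s : ℝ) := by
    rw [← hcx]; exact lemA _
  have e3 : LcodedConv K s j
      = (∑ S ∈ (univ : Finset (Fin K)).powersetCard s, cdcf S (insert y₀ T₀))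
        / (Nat.choose K s : ℝ) := by
    rw [← hcy]; exact lemA _
  have e4 : LcodedConv K s (j + 1)
      = (∑ S ∈ (univ : Finset (Fin K)).powersetCard s, cdcf S (insert x₀ (insert y₀ T₀)))
        / (Nat.choose K s : ℝ) := by
    rw [← hcxy]; exact lemA _
  rw [ge_iff_le, two_mul]
  nth_rewrite 1 [e2]
  nth_rewrite 1 [e3]
  rw [e1, e4, ← add_div, ← add_div, div_le_div_iff_of_pos_right hcpos]
  exact hsum
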